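/- arXiv:2110.06272 — 4 statements merged into one kernel-verified Lean document; each statement's English description precedes it below -/
import Mathlib

section
/- For every complex number s ≠ 1 and every integer n ≥ 2, the series ∑_{k=1}^∞ (-1)^k binom(1-s, k) · n^{1-s-k} converges absolutely and ∫_{n-1}^{n} x^{-s} dx = (1/(s-1)) · ∑_{k=1}^∞ (-1)^k binom(1-s, k) · n^{1-s-k}. -/
open MeasureTheory

/-- The generalized binomial coefficient `binom(s, k) = (∏_{j=0}^{k-1} (s - j)) / k!`. -/
noncomputable def cbinom (s : ℂ) (k : ℕ) : ℂ :=
  (∏ j ∈ Finset.range k, (s - j)) / (Nat.factorial k : ℂ)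

lemma cbinom_zero (a : ℂ) : cbinom a 0 = 1 := by simp [cbinom]

lemma cbinom_one (a : ℂ) : cbinom a 1 = a := by simp [cbinom]

lemma cbinom_succ (a : ℂ) (k : ℕ) :
    ((k : ℂ) + 1) * cbinom a (k + 1) = (a - k) * cbinom a k := by
  have hk : ((k : ℂ) + 1) ≠ 0 := Nat.cast_add_one_ne_zero k
  have hf : ((Nat.factorial k : ℂ)) ≠ 0 := Nat.cast_ne_zero.2 (Nat.factorial_ne_zero k)
  rw [cbinom, cbinom, Finset.prod_range_succ, Nat.factorial_succ]
  push_cast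
  field_simp

lemma summable_cbinom_mul (a : ℂ) {r : ℝ} (h0 : 0 ≤ r) (h1 : r < 1) :
    Summable (fun k => ‖cbinom a k‖ * r ^ k) := by
  apply summable_of_ratio_norm_eventually_le (r := (1 + r) / 2) (by linarith)
  have hε : (0:ℝ) < (1 - r) / 2 := by linarith
  filter_upwards [Filter.eventually_ge_atTop (⌈‖a‖ * r / ((1 - r) / 2)⌉₊)] with k hk
  have hkk : ‖a‖ * r ≤ ((1 - r) / 2) * k := by
    have h2 : (⌈‖a‖ * r / ((1 - r) / 2)⌉₊ : ℝ) ≤ k := Nat.cast_le.2 hk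
    have h4 : ‖a‖ * r / ((1 - r) / 2) ≤ (k:ℝ) := (Nat.le_ceil _).trans h2
    rw [div_le_iff₀ hε] at h4
    linarith
  have hknn : (0:ℝ) ≤ (k:ℝ) := Nat.cast_nonneg k
  have hkpos : (0:ℝ) < (k:ℝ) + 1 := by linarith
  -- norm of the recurrence
  have hrec : ((k:ℝ) + 1) * ‖cbinom a (k+1)‖ = ‖a - k‖ * ‖cbinom a k‖ := by
    have := congrArg norm (cbinom_succ a k)
    rw [norm_mul, norm_mul] at this
    rwa [show ‖(k:ℂ) + 1‖ = (k:ℝ) + 1 by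
      rw [show ((k:ℂ)+1) = ((k+1:ℕ):ℂ) by push_cast; ring, Complex.norm_natCast]; push_cast; ring] at this
  have hbound : ‖a - (k:ℂ)‖ ≤ ‖a‖ + k := by
    calc ‖a - (k:ℂ)‖ ≤ ‖a‖ + ‖(k:ℂ)‖ := norm_sub_le _ _
    _ = ‖a‖ + k := by simp [Complex.norm_natCast]
  have hpk : (0:ℝ) ≤ r ^ k := pow_nonneg h0 k
  have hck : (0:ℝ) ≤ ‖cbinom a k‖ := norm_nonneg _
  rw [Real.norm_of_nonneg (by positivity), Real.norm_of_nonneg (by positivity)]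
  rw [pow_succ]
  -- goal: ‖cbinom a (k+1)‖ * (r^k * r) ≤ (1+r)/2 * (‖cbinom a k‖ * r^k)
  have key : ‖a - (k:ℂ)‖ * r ≤ (1 + r) / 2 * ((k:ℝ) + 1) := by nlinarith [norm_nonneg (a - (k:ℂ))]
  have h5 : ((k:ℝ)+1) * (‖cbinom a (k+1)‖ * (r ^ k * r)) ≤ ((k:ℝ)+1) * ((1 + r) / 2 * (‖cbinom a k‖ * r ^ k)) := by
    calc ((k:ℝ)+1) * (‖cbinom a (k+1)‖ * (r ^ k * r))
        = (‖a - (k:ℂ)‖ * r) * (‖cbinom a k‖ * r ^ k) := by rw [← mul_assoc, hrec]; ring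
    _ ≤ ((1 + r) / 2 * ((k:ℝ) + 1)) * (‖cbinom a k‖ * r ^ k) := by
        apply mul_le_mul_of_nonneg_right key (by positivity)
    _ = ((k:ℝ)+1) * ((1 + r) / 2 * (‖cbinom a k‖ * r ^ k)) := by ring
  exact le_of_mul_le_mul_left h5 hkpos

lemma one_le_radius_cbinom (a : ℂ) :
    1 ≤ (FormalMultilinearSeries.ofScalars ℂ (cbinom a)).radius := by
  apply ENNReal.le_of_forall_nnreal_lt
  intro r hr
  apply FormalMultilinearSeries.le_radius_of_summable_norm
  simp_rw [FormalMultilinearSeries.ofScalars_norm]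
  exact summable_cbinom_mul a r.coe_nonneg (by exact_mod_cast hr)

open FormalMultilinearSeries in
lemma hasSum_cbinom (a : ℂ) {z : ℂ} (hz : ‖z‖ < 1) :
    HasSum (fun k => cbinom a k * z ^ k) ((1 + z) ^ a) := by
  set c := cbinom a with hc
  set p := FormalMultilinearSeries.ofScalars ℂ c with hp
  set f := p.sum with hfdef
  have hrad := one_le_radius_cbinom a
  have hf : HasFPowerSeriesOnBall f p 0 1 :=
    (p.hasFPowerSeriesOnBall (lt_of_lt_of_le zero_lt_one hrad)).mono zero_lt_one hrad
  have hmem : ∀ w : ℂ, ‖w‖ < 1 → w ∈ Metric.eball (0 : ℂ) 1 := by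
    intro w hw
    simp only [Metric.mem_eball, edist_zero_right]
    rw [← ofReal_norm_eq_enorm, ← ENNReal.ofReal_one, ENNReal.ofReal_lt_ofReal_iff zero_lt_one]
    simpa using hw
  have hsum : ∀ w : ℂ, ‖w‖ < 1 → HasSum (fun k => c k * w ^ k) (f w) := by
    intro w hw
    have h0 := hf.hasSum (hmem w hw)
    rw [zero_add] at h0
    refine h0.congr_fun fun k => ?_
    rw [FormalMultilinearSeries.ofScalars_apply_eq, smul_eq_mul]
  have hf0 : f 0 = 1 := by
    have h1 := hsum 0 (by simp)
    have h2 : HasSum (fun k => c k * (0:ℂ) ^ k) 1 := by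
      have := hasSum_single (f := fun k => c k * (0:ℂ) ^ k) 0 (by
        intro b hb
        simp [zero_pow hb])
      simpa [hc, cbinom_zero] using this
    exact h1.unique h2
  have hdiff : ∀ w : ℂ, ‖w‖ < 1 → DifferentiableAt ℂ f w := by
    intro w hw
    exact (hf.analyticAt_of_mem (by simpa using hmem w hw)).differentiableAt
  have hd := hf.fderiv
  have hderiv : ∀ w : ℂ, ‖w‖ < 1 →
      HasSum (fun (k : ℕ) => ((k : ℂ) + 1) * c (k + 1) * w ^ (k + 1)) (w * deriv f w) := by
    intro w hw
    have h1 := (hd.hasSum (hmem w hw)).mapL (ContinuousLinearMap.apply ℂ ℂ w)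
    have h2 : ∀ k : ℕ, (ContinuousLinearMap.apply ℂ ℂ w) (p.derivSeries k fun _ => w)
        = ((k : ℂ) + 1) * c (k + 1) * w ^ (k + 1) := by
      intro k
      rw [ContinuousLinearMap.apply_apply, FormalMultilinearSeries.derivSeries_apply_diag,
        FormalMultilinearSeries.ofScalars_apply_eq, nsmul_eq_mul, smul_eq_mul,
        Nat.cast_add, Nat.cast_one]
      ring
    have h3 : (ContinuousLinearMap.apply ℂ ℂ w) (fderiv ℂ f (0 + w)) = w * deriv f w := by
      rw [zero_add, ContinuousLinearMap.apply_apply]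
      calc (fderiv ℂ f w) w = (fderiv ℂ f w) (w • 1) := by rw [smul_eq_mul, mul_one]
      _ = w • ((fderiv ℂ f w) 1) := (fderiv ℂ f w).map_smul w 1
      _ = w * deriv f w := by rw [smul_eq_mul, fderiv_apply_one_eq_deriv]
    rw [h3] at h1
    exact h1.congr_fun fun k => (h2 k).symm
  have hode : ∀ w : ℂ, ‖w‖ < 1 → (1 + w) * deriv f w = a * f w := by
    intro w hw
    rcases eq_or_ne w 0 with h0 | h0
    · subst h0
      have hda : deriv f 0 = a := by
        rw [hf.hasFPowerSeriesAt.deriv]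
        show (p 1) (fun _ => (1 : ℂ)) = a
        rw [hp, FormalMultilinearSeries.ofScalars_apply_eq, hc, cbinom_one]
        simp
      rw [hda, hf0]; ring
    · have h1 := hderiv w hw
      have h2 : HasSum (fun (k : ℕ) => (k : ℂ) * c k * w ^ (k + 1)) (w * (w * deriv f w)) := by
        have h2a := h1.mul_left w
        have h2b : HasSum (fun (k : ℕ) =>
            (fun (m : ℕ) => (m : ℂ) * c m * w ^ (m + 1)) (k + 1)) (w * (w * deriv f w)) := by
          refine h2a.congr_fun fun k => ?_
          push_cast
          ring
        have := (hasSum_nat_add_iff (f := fun (m : ℕ) => (m : ℂ) * c m * w ^ (m + 1)) 1).mp h2b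
        simpa using this
      have h4 : HasSum (fun (k : ℕ) => a * c k * w ^ (k + 1))
          (w * deriv f w + w * (w * deriv f w)) := by
        refine (h1.add h2).congr_fun fun k => ?_
        linear_combination (-(w ^ (k + 1))) * cbinom_succ a k
      have h5 : HasSum (fun (k : ℕ) => a * c k * w ^ (k + 1)) (a * w * f w) := by
        refine ((hsum w hw).mul_left (a * w)).congr_fun fun k => ?_
        ring
      have key := h4.unique h5
      apply mul_left_cancel₀ h0
      linear_combination key
  have hF : ∀ w ∈ Metric.ball (0 : ℂ) 1, HasDerivAt (fun u => (1 + u) ^ (-a) * f u) 0 w := by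
    intro w hw
    rw [Metric.mem_ball, dist_zero_right] at hw
    have hslit : (1 + w) ∈ Complex.slitPlane := by
      refine Or.inl ?_
      have h1 := (Complex.abs_re_le_norm w)
      have h2 : -‖w‖ ≤ w.re := by
        have := neg_abs_le w.re
        nlinarith
      simp only [Complex.add_re, Complex.one_re]
      linarith
    have hne : (1 : ℂ) + w ≠ 0 := Complex.slitPlane_ne_zero hslit
    have hdf := (hdiff w hw).hasDerivAt
    have hpow : HasDerivAt (fun u : ℂ => (1 + u) ^ (-a)) (-a * (1 + w) ^ (-a - 1) * 1) w :=
      HasDerivAt.cpow_const ((hasDerivAt_id w).const_add 1) hslit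
    have hmul := hpow.mul hdf
    refine hmul.congr_deriv ?_
    have hsplit : (1 + w) ^ (-a) = (1 + w) ^ (-a - 1) * (1 + w) := by
      conv_lhs => rw [show (-a) = (-a - 1) + 1 by ring]
      rw [Complex.cpow_add _ _ hne, Complex.cpow_one]
    rw [hsplit]
    linear_combination ((1 + w) ^ (-a - 1)) * (hode w hw)
  have hzm : z ∈ Metric.ball (0 : ℂ) 1 := by
    rw [Metric.mem_ball, dist_zero_right]; exact hz
  have h0m : (0 : ℂ) ∈ Metric.ball (0 : ℂ) 1 := Metric.mem_ball_self zero_lt_one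
  have hconst : (1 + z) ^ (-a) * f z = 1 := by
    have hcv : Convex ℝ (Metric.ball (0 : ℂ) 1) := convex_ball 0 1
    have hdo : DifferentiableOn ℂ (fun u => (1 + u) ^ (-a) * f u) (Metric.ball (0 : ℂ) 1) :=
      fun w hw => ((hF w hw).differentiableAt).differentiableWithinAt
    have hfd0 : ∀ w ∈ Metric.ball (0 : ℂ) 1,
        fderivWithin ℂ (fun u => (1 + u) ^ (-a) * f u) (Metric.ball (0 : ℂ) 1) w = 0 := by
      intro w hw
      rw [fderivWithin_of_isOpen Metric.isOpen_ball hw, (hF w hw).hasFDerivAt.fderiv]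
      ext u
      simp
    have := hcv.is_const_of_fderivWithin_eq_zero hdo hfd0 hzm h0m
    rw [this]
    simp [hf0, Complex.one_cpow]
  have hslitz : (1 : ℂ) + z ≠ 0 := by
    intro h
    have h1 := Complex.abs_re_le_norm z
    have : z.re = -1 := by
      have := congrArg Complex.re h
      simp only [Complex.add_re, Complex.one_re, Complex.zero_re] at this
      linarith
    rw [this] at h1
    simp only [abs_neg, abs_one] at h1
    linarith
  have hfz : f z = (1 + z) ^ a := by
    have hpne : (1 + z) ^ a ≠ 0 := by
      rw [Ne, Complex.cpow_eq_zero_iff]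
      tauto
    rw [Complex.cpow_neg] at hconst
    field_simp at hconst
    exact hconst
  rw [← hfz]
  exact hsum z hz

/-- For every complex `s ≠ 1` and integer `n ≥ 2`, the series
`∑_{k=1}^∞ (-1)^k binom(1-s, k) n^(1-s-k)` converges absolutely, and
`∫_{n-1}^n x^(-s) dx = (1/(s-1)) ∑_{k=1}^∞ (-1)^k binom(1-s, k) n^(1-s-k)`. -/
theorem stmt_4 (s : ℂ) (hs : s ≠ 1) (n : ℕ) (hn : 2 ≤ n) :
    Summable (fun k : ℕ =>
      ‖(-1 : ℂ) ^ (k + 1) * cbinom (1 - s) (k + 1) * (n : ℂ) ^ (1 - s - ((k : ℂ) + 1))‖) ∧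
    ∫ x : ℝ in ((n : ℝ) - 1)..(n : ℝ), (x : ℂ) ^ (-s)
      = (1 / (s - 1)) *
        ∑' k : ℕ, (-1 : ℂ) ^ (k + 1) * cbinom (1 - s) (k + 1) * (n : ℂ) ^ (1 - s - ((k : ℂ) + 1)) := by
  have hn2 : (2:ℝ) ≤ (n:ℝ) := by exact_mod_cast hn
  have hn1 : (1:ℝ) < (n:ℝ) := by linarith
  have hn0' : (n:ℂ) ≠ 0 := Nat.cast_ne_zero.mpr (by omega)
  set a : ℂ := 1 - s with ha
  have ha0 : a ≠ 0 := sub_ne_zero.mpr (Ne.symm hs)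
  set z : ℂ := -(n:ℂ)⁻¹ with hzdef
  have hnz : ‖z‖ < 1 := by
    rw [hzdef, norm_neg, norm_inv, Complex.norm_natCast]
    exact inv_lt_one_of_one_lt₀ hn1
  have hb := hasSum_cbinom a hnz
  have h1z : (1:ℂ) + z = ((((n:ℝ) - 1) / n : ℝ) : ℂ) := by
    rw [hzdef]
    push_cast
    field_simp
    ring
  have hcpowmul : ((n:ℝ):ℂ) ^ a * ((((n:ℝ) - 1) / n : ℝ) : ℂ) ^ a = (((n:ℝ) - 1 : ℝ) : ℂ) ^ a := by
    rw [← Complex.mul_cpow_ofReal_nonneg (by positivity)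
      (div_nonneg (by linarith) (by linarith))]
    congr 2
    push_cast
    field_simp
  have hT : HasSum (fun k : ℕ => (-1:ℂ) ^ k * cbinom a k * (n:ℂ) ^ (a - (k:ℂ)))
      ((((n:ℝ) - 1 : ℝ) : ℂ) ^ a) := by
    have h := hb.mul_left ((n:ℂ) ^ a)
    have hsumval : (n:ℂ) ^ a * (1 + z) ^ a = (((n:ℝ) - 1 : ℝ) : ℂ) ^ a := by
      rw [h1z, show ((n:ℂ)) = (((n:ℝ)):ℂ) by norm_cast]
      exact hcpowmul
    rw [hsumval] at h
    refine h.congr_fun fun k => ?_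
    rw [Complex.cpow_sub _ _ hn0', Complex.cpow_natCast, hzdef,
      show (-(↑n:ℂ)⁻¹) = (-1) * ((n:ℂ))⁻¹ by ring, mul_pow, inv_pow, div_eq_mul_inv]
    ring
  have hT1 : HasSum (fun k : ℕ => (-1:ℂ) ^ (k+1) * cbinom a (k+1) * (n:ℂ) ^ (a - ((k:ℂ)+1)))
      ((((n:ℝ) - 1 : ℝ) : ℂ) ^ a - (n:ℂ) ^ a) := by
    have h2 : HasSum (fun k : ℕ => (-1:ℂ) ^ (k+1) * cbinom a (k+1) * (n:ℂ) ^ (a - ((k+1 : ℕ):ℂ)))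
        ((((n:ℝ) - 1 : ℝ) : ℂ) ^ a - (n:ℂ) ^ a) := by
      apply (hasSum_nat_add_iff
        (f := fun k : ℕ => (-1:ℂ) ^ k * cbinom a k * (n:ℂ) ^ (a - (k:ℂ))) 1).mpr
      have : (((n:ℝ) - 1 : ℝ) : ℂ) ^ a - (n:ℂ) ^ a
          + ∑ i ∈ Finset.range 1, (-1:ℂ) ^ i * cbinom a i * (n:ℂ) ^ (a - (i:ℂ))
          = (((n:ℝ) - 1 : ℝ) : ℂ) ^ a := by
        simp [cbinom_zero]
      rw [this]
      exact hT
    refine h2.congr_fun fun k => ?_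
    push_cast
    ring_nf
  have hnorm : ∀ k : ℕ, ‖(-1:ℂ) ^ (k+1) * cbinom a (k+1) * (n:ℂ) ^ (a - ((k:ℂ)+1))‖
      = ‖(n:ℂ) ^ a‖ * (‖cbinom a (k+1)‖ * ((n:ℝ)⁻¹) ^ (k+1)) := by
    intro k
    rw [norm_mul, norm_mul]
    have h1 : ‖(-1:ℂ) ^ (k+1)‖ = 1 := by simp
    have h2 : (n:ℂ) ^ (a - ((k:ℂ)+1)) = (n:ℂ) ^ a / (n:ℂ) ^ (k+1) := by
      rw [show a - ((k:ℂ)+1) = a - ((k+1 : ℕ):ℂ) by push_cast; ring,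
        Complex.cpow_sub _ _ hn0', Complex.cpow_natCast]
    rw [h1, h2, norm_div, norm_pow, Complex.norm_natCast, one_mul, div_eq_mul_inv, ← inv_pow]
    ring
  have hsummable : Summable (fun k : ℕ =>
      ‖(-1:ℂ) ^ (k+1) * cbinom a (k+1) * (n:ℂ) ^ (a - ((k:ℂ)+1))‖) := by
    have h1 := summable_cbinom_mul a (r := (n:ℝ)⁻¹) (by positivity) (inv_lt_one_of_one_lt₀ hn1)
    have h2 := ((summable_nat_add_iff 1).mpr h1).mul_left ‖(n:ℂ) ^ a‖
    exact h2.congr fun k => (hnorm k).symm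
  have hint : (∫ x : ℝ in ((n:ℝ)-1)..(n:ℝ), (x:ℂ) ^ (-s))
      = (((n:ℝ):ℂ) ^ a - ((((n:ℝ)-1):ℝ):ℂ) ^ a) / a := by
    rw [integral_cpow (Or.inr ⟨?_, ?_⟩)]
    · rw [show -s + 1 = a by rw [ha]; ring]
    · intro h
      exact hs (by linear_combination -h)
    · intro h
      rw [Set.mem_uIcc] at h
      rcases h with ⟨h1, _⟩ | ⟨_, h2⟩ <;> linarith
  refine ⟨hsummable, ?_⟩
  rw [hT1.tsum_eq, hint]
  have hsne : s - 1 ≠ 0 := sub_ne_zero.mpr hs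
  have hcast : ((n:ℝ):ℂ) = (n:ℂ) := by norm_cast
  rw [hcast, ha]
  have hane : (1:ℂ) - s ≠ 0 := ha ▸ ha0
  field_simp
  ring
end

section
/- Let s be a complex number that is not equal to 1 and is not a nonpositive integer. Then the series ∑_{k=1}^∞ (-1)^k binom(1-s, k) · (ζ(k+s-1) - 1) converges and its sum equals 1. -/
open Complex Finset Filter Topology Metric
set_option maxHeartbeats 1000000



noncomputable def pm (a : ℂ) (k : ℕ) : ℂ :=
  (∏ j ∈ Finset.range k, (a + j)) / (Nat.factorial k : ℂ)

lemma pm_zero (a : ℂ) : pm a 0 = 1 := by simp [pm]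

lemma pm_succ (a : ℂ) (k : ℕ) : pm a (k + 1) = pm a k * (a + k) / ((k : ℂ) + 1) := by
  have h1 : ((Nat.factorial k : ℂ)) ≠ 0 := Nat.cast_ne_zero.2 (Nat.factorial_ne_zero k)
  have h2 : ((k : ℂ) + 1) ≠ 0 := by
    have := Nat.cast_ne_zero (R := ℂ).2 (Nat.succ_ne_zero k)
    push_cast at this; exact this
  rw [pm, pm, Finset.prod_range_succ, Nat.factorial_succ]
  push_cast
  rw [div_mul_eq_mul_div, div_div, mul_comm ((k:ℂ)+1) _]

/-- Real product bound via Bernoulli: `∏_{j<k} (κ + j) ≤ (k+1)^κ * k!` for `κ ≥ 1`. -/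
lemma prod_le_rpow_factorial {κ : ℝ} (hκ : 1 ≤ κ) (k : ℕ) :
    (∏ j ∈ Finset.range k, (κ + j)) ≤ ((k : ℝ) + 1) ^ κ * (Nat.factorial k : ℝ) := by
  induction k with
  | zero => simp [Real.one_rpow]
  | succ k ih =>
    rw [Finset.prod_range_succ, Nat.factorial_succ]
    have hk1 : (0:ℝ) < (k:ℝ) + 1 := by positivity
    have hb : ((k : ℝ) + 1) ^ κ * (κ + k) ≤ ((k : ℝ) + 2) ^ κ * ((k : ℝ) + 1) := by
      have hbern : 1 + κ * (1 / ((k:ℝ)+1)) ≤ (1 + 1 / ((k:ℝ)+1)) ^ κ := by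
        exact one_add_mul_self_le_rpow_one_add (le_trans (by norm_num : (-1:ℝ) ≤ 0) (by positivity) : (-1:ℝ) ≤ 1/((k:ℝ)+1)) hκ
      have h2 : ((k:ℝ) + 2) ^ κ = ((k:ℝ)+1) ^ κ * (1 + 1/((k:ℝ)+1)) ^ κ := by
        rw [← Real.mul_rpow (by positivity) (by positivity)]
        congr 1
        field_simp
        ring
      rw [h2]
      have h3 : (κ + k) ≤ ((k:ℝ) + 1) * (1 + κ * (1 / ((k:ℝ)+1))) := by
        rw [mul_add, mul_one, mul_comm κ _, ← mul_assoc]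
        rw [mul_one_div, div_self (ne_of_gt hk1), one_mul]
        linarith
      calc ((k : ℝ) + 1) ^ κ * (κ + k)
          ≤ ((k : ℝ) + 1) ^ κ * (((k:ℝ) + 1) * (1 + κ * (1 / ((k:ℝ)+1)))) := by
            exact mul_le_mul_of_nonneg_left h3 (by positivity)
        _ ≤ ((k : ℝ) + 1) ^ κ * (((k:ℝ) + 1) * (1 + 1/((k:ℝ)+1)) ^ κ) := by
            refine mul_le_mul_of_nonneg_left ?_ (by positivity)
            exact mul_le_mul_of_nonneg_left hbern (by positivity)
        _ = ((k:ℝ)+1) ^ κ * (1 + 1/((k:ℝ)+1)) ^ κ * ((k:ℝ)+1) := by ring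
    have hprodnn : 0 ≤ ∏ j ∈ Finset.range k, (κ + (j:ℝ)) :=
      Finset.prod_nonneg fun j _ => by positivity
    calc (∏ j ∈ Finset.range k, (κ + (j:ℝ))) * (κ + k)
        ≤ (((k : ℝ) + 1) ^ κ * (Nat.factorial k : ℝ)) * (κ + k) := by
          exact mul_le_mul_of_nonneg_right ih (by positivity)
      _ = (Nat.factorial k : ℝ) * (((k : ℝ) + 1) ^ κ * (κ + k)) := by ring
      _ ≤ (Nat.factorial k : ℝ) * (((k : ℝ) + 2) ^ κ * ((k : ℝ) + 1)) := by
          refine mul_le_mul_of_nonneg_left hb (by positivity)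
      _ = ((↑(k+1) : ℝ) + 1) ^ κ * ((Nat.factorial (k+1) : ℝ)) := by
          rw [Nat.factorial_succ]; push_cast; ring
  
/-- Norm bound for the coefficients. -/
lemma norm_pm_le {a : ℂ} {κ : ℝ} (hκ : 1 ≤ κ) (ha : ‖a‖ ≤ κ) (k : ℕ) :
    ‖pm a k‖ ≤ ((k : ℝ) + 1) ^ κ := by
  have hfac : (0:ℝ) < (Nat.factorial k : ℝ) := by positivity
  have h1 : ‖∏ j ∈ Finset.range k, (a + j)‖ ≤ ∏ j ∈ Finset.range k, (κ + (j:ℝ)) := by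
    refine (Finset.norm_prod_le _ _).trans ?_
    refine Finset.prod_le_prod (fun j _ => norm_nonneg _) (fun j _ => ?_)
    calc ‖a + (j:ℂ)‖ ≤ ‖a‖ + ‖(j:ℂ)‖ := norm_add_le _ _
      _ ≤ κ + j := by
          have : ‖(j:ℂ)‖ = (j:ℝ) := by
            rw [Complex.norm_natCast]
          rw [this]; linarith
  have h2 := (prod_le_rpow_factorial hκ k)
  rw [pm, norm_div]
  have : ‖(Nat.factorial k : ℂ)‖ = (Nat.factorial k : ℝ) := by
    rw [Complex.norm_natCast]
  rw [this, div_le_iff₀ hfac]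
  exact h1.trans h2



/-- `(k+1)^κ r^k` is summable for `0 < r < 1`. -/
lemma summable_poly_geom {κ r : ℝ} (hκ : 0 ≤ κ) (hr0 : 0 < r) (hr1 : r < 1) :
    Summable (fun k : ℕ => ((k : ℝ) + 1) ^ κ * r ^ k) := by
  set N : ℕ := ⌈κ⌉₊ with hN
  have hbase : Summable (fun k : ℕ => ((k : ℝ) ^ N) * r ^ k) := by
    have := summable_pow_mul_geometric_of_norm_lt_one (R := ℝ) N
      (r := r) (by rw [Real.norm_eq_abs, abs_of_pos hr0]; exact hr1)
    simpa using this
  have hshift : Summable (fun k : ℕ => (((k:ℝ) + 1) ^ N) * r ^ (k + 1)) := by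
    have := (summable_nat_add_iff (f := fun k : ℕ => ((k : ℝ) ^ N) * r ^ k) 1).mpr hbase
    simpa [Nat.cast_add] using this
  have h2 : Summable (fun k : ℕ => (((k:ℝ) + 1) ^ N) * r ^ k) := by
    have := hshift.mul_left (r⁻¹)
    refine this.congr fun k => ?_
    rw [pow_succ]
    field_simp
  refine Summable.of_nonneg_of_le (fun k => by positivity) (fun k => ?_) h2
  have h1k : (1:ℝ) ≤ (k:ℝ) + 1 := by have := Nat.cast_nonneg (α := ℝ) k; linarith
  have : ((k : ℝ) + 1) ^ κ ≤ ((k:ℝ) + 1) ^ (N:ℝ) :=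
    Real.rpow_le_rpow_of_exponent_le h1k (Nat.le_ceil κ)
  rw [Real.rpow_natCast] at this
  exact mul_le_mul_of_nonneg_right this (by positivity)

/-- shifted version with `(k+b)^κ`. -/
lemma summable_poly_geom' {κ b r : ℝ} (hκ : 0 ≤ κ) (hb : 1 ≤ b) (hr0 : 0 < r) (hr1 : r < 1) :
    Summable (fun k : ℕ => ((k : ℝ) + b) ^ κ * r ^ k) := by
  have h := (summable_poly_geom hκ hr0 hr1).mul_left (b ^ κ)
  refine Summable.of_nonneg_of_le (fun k => by positivity) (fun k => ?_) h
  have h1 : ((k:ℝ) + b) ^ κ ≤ (b * ((k:ℝ) + 1)) ^ κ := by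
    refine Real.rpow_le_rpow (by positivity) ?_ hκ
    nlinarith [Nat.cast_nonneg (α := ℝ) k]
  rw [Real.mul_rpow (by linarith) (by positivity)] at h1
  calc ((k:ℝ) + b) ^ κ * r ^ k ≤ (b ^ κ * ((k:ℝ)+1) ^ κ) * r ^ k :=
        mul_le_mul_of_nonneg_right h1 (by positivity)
    _ = b ^ κ * (((k:ℝ)+1) ^ κ * r ^ k) := by ring

lemma norm_nat2_cpow (n : ℕ) (w : ℂ) : ‖((n : ℂ) + 2) ^ w‖ = ((n : ℝ) + 2) ^ w.re := by
  have h : ((n : ℂ) + 2) = (((n : ℝ) + 2 : ℝ) : ℂ) := by push_cast; ring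
  rw [h, Complex.norm_cpow_eq_rpow_re_of_pos (by positivity)]

lemma summable_nat2_rpow {q : ℝ} (hq : 1 < q) :
    Summable (fun n : ℕ => ((n : ℝ) + 2) ^ (-q)) := by
  have h := (Real.summable_nat_rpow (p := -q)).mpr (by linarith)
  have h2 := (summable_nat_add_iff (f := fun n : ℕ => (n : ℝ) ^ (-q)) 2).mpr h
  refine h2.congr fun n => ?_
  push_cast
  norm_num

/-- `ζ z - 1` as a sum over `n + 2`. -/
lemma zeta_sub_one_hasSum {z : ℂ} (hz : 1 < z.re) :
    HasSum (fun n : ℕ => ((n : ℂ) + 2) ^ (-z)) (riemannZeta z - 1) := by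
  have hsum : Summable (fun n : ℕ => 1 / ((n : ℂ) + 1) ^ z) := by
    have : Summable (fun n : ℕ => 1 / (n : ℂ) ^ z) := by
      rw [Complex.summable_one_div_nat_cpow]; exact hz
    have h2 := (summable_nat_add_iff (f := fun n : ℕ => 1 / (n : ℂ) ^ z) 1).mpr this
    refine h2.congr fun n => ?_
    push_cast
    ring_nf
  have hζ : HasSum (fun n : ℕ => 1 / ((n : ℂ) + 1) ^ z) (riemannZeta z) := by
    have := hsum.hasSum
    rwa [← zeta_eq_tsum_one_div_nat_add_one_cpow hz] at this
  have h1 : HasSum (fun n : ℕ => 1 / ((n : ℂ) + 1 + 1) ^ z) (riemannZeta z - 1) := by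
    have heq : riemannZeta z - 1 + ∑ i ∈ Finset.range 1, 1 / ((i : ℂ) + 1) ^ z
        = riemannZeta z := by
      simp [Complex.one_cpow]
    have h := (hasSum_nat_add_iff (f := fun n : ℕ => 1 / ((n : ℂ) + 1) ^ z)
      (g := riemannZeta z - 1) 1).mpr (by rw [heq]; exact hζ)
    refine h.congr_fun fun n => ?_
    push_cast
    ring_nf
  refine h1.congr_fun fun n => ?_
  rw [Complex.cpow_neg]
  push_cast
  rw [one_div]
  ring_nf





lemma pm_succ_mul (a : ℂ) (k : ℕ) : pm a (k + 1) * ((k : ℂ) + 1) = pm a k * (a + k) := by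
  have h2 : ((k : ℂ) + 1) ≠ 0 := by
    have := Nat.cast_ne_zero (R := ℂ).2 (Nat.succ_ne_zero k)
    push_cast at this; exact this
  rw [pm_succ]; field_simp

/-- The binomial series for real `x ∈ [0, 1/2]` and complex exponent. -/
lemma binom_hasSum (a : ℂ) {x : ℝ} (hx0 : 0 ≤ x) (hx1 : x ≤ 1/2) :
    HasSum (fun k : ℕ => pm a k * (x : ℂ) ^ k) ((((1 - x : ℝ)) : ℂ) ^ (-a)) := by
  set κ : ℝ := max 1 ‖a‖ with hκdef
  have hκ1 : 1 ≤ κ := le_max_left _ _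
  have hκa : ‖a‖ ≤ κ := le_max_right _ _
  set B : Set ℂ := Metric.ball 0 (3/4) with hBdef
  have hBopen : IsOpen B := Metric.isOpen_ball
  set u : ℕ → ℝ := fun k => ((k : ℝ) + 1) ^ κ * (3/4 : ℝ) ^ k with hudef
  have hu : Summable u := summable_poly_geom' (by linarith) le_rfl (by norm_num) (by norm_num)
  set F : ℕ → ℂ → ℂ := fun k w => pm a k * w ^ k with hFdef
  have hFdiff : ∀ k : ℕ, DifferentiableOn ℂ (F k) B := fun k =>
    ((differentiable_pow k).const_mul _).differentiableOn
  have hFle : ∀ (k : ℕ) (w : ℂ), w ∈ B → ‖F k w‖ ≤ u k := by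
    intro k w hw
    have hwn : ‖w‖ ≤ 3/4 := by
      have := Metric.mem_ball.mp hw
      simpa [dist_eq_norm] using this.le
    calc ‖pm a k * w ^ k‖ = ‖pm a k‖ * ‖w‖ ^ k := by rw [norm_mul, norm_pow]
      _ ≤ ((k : ℝ) + 1) ^ κ * (3/4 : ℝ) ^ k := by
          refine mul_le_mul (norm_pm_le hκ1 hκa k) (pow_le_pow_left₀ (norm_nonneg _) hwn k)
            (by positivity) (by positivity)
  set f : ℂ → ℂ := fun w => ∑' k, F k w with hfdef
  have hfdiff : DifferentiableOn ℂ f B :=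
    differentiableOn_tsum_of_summable_norm hu hFdiff hBopen hFle
  have hsum : ∀ w ∈ B, Summable (fun k => F k w) := by
    intro w hw
    exact Summable.of_norm (Summable.of_nonneg_of_le (fun k => norm_nonneg _)
      (fun k => hFle k w hw) hu)
  -- the ODE
  have key : ∀ w ∈ B, (1 - w) * deriv f w = a * f w := by
    intro w hw
    have hd : HasSum (fun k => deriv (F k) w) (deriv f w) :=
      hasSum_deriv_of_summable_norm hu hFdiff hBopen hFle hw
    have hd' : HasSum (fun k => pm a k * ((k : ℂ) * w ^ (k - 1))) (deriv f w) := by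
      refine hd.congr_fun fun k => ?_
      rw [hFdef]
      simp only []
      rw [deriv_const_mul _ (differentiableAt_pow k), deriv_pow_field]
    have h1 : HasSum (fun k => pm a k * (a + k) * w ^ k) (deriv f w) := by
      have h := (hasSum_nat_add_iff
        (f := fun k : ℕ => pm a k * ((k : ℂ) * w ^ (k - 1))) (g := deriv f w) 1).mpr
        (by simpa using hd')
      refine h.congr_fun fun k => ?_
      refine (calc pm a (k + 1) * (((k + 1 : ℕ) : ℂ) * w ^ (k + 1 - 1))
          = (pm a (k+1) * ((k : ℂ) + 1)) * w ^ k := by push_cast; ring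
        _ = pm a k * (a + k) * w ^ k := by rw [pm_succ_mul]).symm
    have h2 : HasSum (fun k => pm a (k+1) * (((k:ℂ) + 1)) * w ^ (k+1)) (w * deriv f w) := by
      have h := h1.mul_left w
      refine h.congr_fun fun k => ?_
      rw [pm_succ_mul, pow_succ]
      ring
    have h3 : HasSum (fun k => pm a k * (k : ℂ) * w ^ k) (w * deriv f w) := by
      have h := (hasSum_nat_add_iff
        (f := fun k : ℕ => pm a k * (k : ℂ) * w ^ k) 1).mp
        (by
          refine h2.congr_fun fun k => ?_
          push_cast
          ring)
      simpa using h
    have h4 := h1.sub h3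
    have h5 : HasSum (fun k => a * (pm a k * w ^ k)) (deriv f w - w * deriv f w) := by
      refine h4.congr_fun fun k => ?_
      ring
    have h6 := ((hsum w hw).hasSum).mul_left a
    have := h5.unique h6
    rw [hfdef] at this ⊢
    linear_combination this
  -- the function g(t) = (1 - t x)^a f(t x) is constant on [0,1]
  have hxB : ∀ t : ℝ, t ∈ Set.Icc (0:ℝ) 1 → ((t : ℂ) * (x : ℂ)) ∈ B := by
    intro t ht
    rw [hBdef, Metric.mem_ball, dist_zero_right]
    rw [norm_mul, Complex.norm_real, Complex.norm_real]
    rw [Real.norm_eq_abs, Real.norm_eq_abs, _root_.abs_of_nonneg ht.1, _root_.abs_of_nonneg hx0]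
    nlinarith [ht.2]
  have hre : ∀ t : ℝ, t ∈ Set.Icc (0:ℝ) 1 → (1/2 : ℝ) ≤ (1 - (t : ℂ) * (x : ℂ)).re := by
    intro t ht
    have : ((1 : ℂ) - (t : ℂ) * (x : ℂ)) = (((1 - t * x : ℝ)) : ℂ) := by push_cast; ring
    rw [this, Complex.ofReal_re]
    nlinarith [ht.1, ht.2]
  have hslit : ∀ t : ℝ, t ∈ Set.Icc (0:ℝ) 1 → (1 - (t : ℂ) * (x : ℂ)) ∈ Complex.slitPlane := by
    intro t ht
    rw [Complex.mem_slitPlane_iff]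
    left
    linarith [hre t ht]
  have hne : ∀ t : ℝ, t ∈ Set.Icc (0:ℝ) 1 → (1 - (t : ℂ) * (x : ℂ)) ≠ 0 := by
    intro t ht h0
    have := hre t ht
    rw [h0] at this
    simp at this
    linarith
  set g : ℝ → ℂ := fun t => (1 - (t : ℂ) * (x : ℂ)) ^ a * f ((t : ℂ) * (x : ℂ)) with hgdef
  have hgderiv : ∀ t : ℝ, t ∈ Set.Icc (0:ℝ) 1 → HasDerivAt g 0 t := by
    intro t ht
    set w : ℂ := (t : ℂ) * (x : ℂ) with hwdef
    have hwB : w ∈ B := hxB t ht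
    -- derivative of the base
    have hbase : HasDerivAt (fun z : ℂ => 1 - z * (x : ℂ)) (-(x : ℂ)) (t : ℂ) := by
      have h := ((hasDerivAt_id ((t : ℂ))).mul_const ((x : ℂ))).const_sub 1
      simpa using h
    have hcpow : HasDerivAt (fun z : ℂ => (1 - z * (x : ℂ)) ^ a)
        (a * (1 - (t:ℂ) * (x:ℂ)) ^ (a - 1) * (-(x : ℂ))) (t : ℂ) :=
      hbase.cpow_const (hslit t ht)
    have hfd : DifferentiableAt ℂ f w := hfdiff.differentiableAt (hBopen.mem_nhds hwB)
    have hcomp : HasDerivAt (fun z : ℂ => f (z * (x : ℂ))) (deriv f w * (x : ℂ)) (t : ℂ) := by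
      have h := (hfd.hasDerivAt).comp (t : ℂ) ((hasDerivAt_id ((t : ℂ))).mul_const ((x : ℂ)))
      exact h.congr_deriv (by ring)
    have hmul := (hcpow.comp_ofReal).mul (hcomp.comp_ofReal)
    have hval : (a * (1 - (t:ℂ) * (x:ℂ)) ^ (a - 1) * (-(x : ℂ))) * f w
        + (1 - (t:ℂ) * (x:ℂ)) ^ a * (deriv f w * (x : ℂ)) = 0 := by
      have hsplit : ((1:ℂ) - (t:ℂ) * (x:ℂ)) ^ a
          = ((1:ℂ) - (t:ℂ) * (x:ℂ)) ^ (a - 1) * (1 - (t:ℂ) * (x:ℂ)) := by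
        have h := Complex.cpow_add (a - 1) 1 (hne t ht)
        rw [Complex.cpow_one] at h
        rw [show a - 1 + 1 = a by ring] at h
        exact h
      rw [hsplit]
      have hkey := key w hwB
      rw [hwdef] at hkey
      linear_combination (x : ℂ) * ((1:ℂ) - (t:ℂ) * (x:ℂ)) ^ (a - 1) * hkey
    rw [hgdef]
    have : HasDerivAt g ((a * (1 - (t:ℂ) * (x:ℂ)) ^ (a - 1) * (-(x : ℂ))) * f w
        + (1 - (t:ℂ) * (x:ℂ)) ^ a * (deriv f w * (x : ℂ))) t := hmul
    rwa [hval] at this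
  have hconst := constant_of_has_deriv_right_zero
    (f := g) (a := 0) (b := 1)
    (fun t ht => (hgderiv t ht).continuousAt.continuousWithinAt)
    (fun t ht => (hgderiv t (Set.mem_Icc_of_Ico ht)).hasDerivWithinAt)
  have hg10 : g 1 = g 0 := hconst 1 (Set.right_mem_Icc.mpr zero_le_one)
  have hf0 : f 0 = 1 := by
    have h0 : HasSum (fun k => F k 0) 1 := by
      have := hasSum_single (f := fun k => F k 0) 0 (fun k hk => by
        rw [hFdef]
        simp only []
        rw [zero_pow hk, mul_zero])
      simpa [hFdef, pm_zero] using this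
    exact h0.tsum_eq
  have hg1 : ((1:ℂ) - (x:ℂ)) ^ a * f ((x:ℂ)) = 1 := by
    have h := hg10
    rw [hgdef] at h
    simp only [Complex.ofReal_one, Complex.ofReal_zero, one_mul, zero_mul] at h
    rw [hf0, sub_zero, Complex.one_cpow, mul_one] at h
    exact h
  have hbne : ((1:ℂ) - (x:ℂ)) ≠ 0 := by
    have := hne 1 (Set.right_mem_Icc.mpr zero_le_one)
    simpa using this
  have hpow_ne : ((1:ℂ) - (x:ℂ)) ^ a ≠ 0 := by
    intro h
    rw [Complex.cpow_eq_zero_iff] at h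
    exact hbne h.1
  have hfx : f ((x:ℂ)) = ((1:ℂ) - (x:ℂ)) ^ (-a) := by
    rw [Complex.cpow_neg]
    refine eq_inv_of_mul_eq_one_left ?_
    linear_combination hg1
  have hXB : ((x:ℂ)) ∈ B := by simpa using hxB 1 (Set.right_mem_Icc.mpr zero_le_one)
  have hfin := (hsum ((x:ℂ)) hXB).hasSum
  rw [show (∑' k, F k ((x:ℂ))) = f ((x:ℂ)) from rfl, hfx] at hfin
  rw [show (((1 - x : ℝ)) : ℂ) = (1:ℂ) - (x:ℂ) by push_cast; ring]
  exact hfin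





noncomputable def zC : ℝ := 8 * ∑' n : ℕ, ((n : ℝ) + 2) ^ (-(3:ℝ))

lemma zC_nonneg : 0 ≤ zC := by
  have h : 0 ≤ ∑' n : ℕ, ((n : ℝ) + 2) ^ (-(3:ℝ)) :=
    tsum_nonneg (fun n => by positivity)
  unfold zC; positivity

/-- Uniform bound on `ζ z - 1` for `re z ≥ 3`. -/
lemma zeta_sub_one_norm_le {z : ℂ} (hz : 3 ≤ z.re) :
    ‖riemannZeta z - 1‖ ≤ zC * (2:ℝ) ^ (-z.re) := by
  have hz1 : 1 < z.re := by linarith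
  have hs := zeta_sub_one_hasSum hz1
  have hterm : ∀ n : ℕ, ‖((n : ℂ) + 2) ^ (-z)‖
      ≤ ((n : ℝ) + 2) ^ (-(3:ℝ)) * (8 * (2:ℝ) ^ (-z.re)) := by
    intro n
    rw [norm_nat2_cpow, neg_re]
    have hb : (2:ℝ) ≤ (n:ℝ) + 2 := by
      have := Nat.cast_nonneg (α := ℝ) n; linarith
    have h0 : (0:ℝ) < (n:ℝ) + 2 := by positivity
    have hsplit : ((n : ℝ) + 2) ^ (-z.re)
        = ((n : ℝ) + 2) ^ (-(3:ℝ)) * ((n : ℝ) + 2) ^ (3 - z.re) := by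
      rw [← Real.rpow_add h0]; ring_nf
    rw [hsplit]
    refine mul_le_mul_of_nonneg_left ?_ (by positivity)
    have h8 : (8 : ℝ) * (2:ℝ) ^ (-z.re) = (2:ℝ) ^ (3 - z.re) := by
      rw [show (3 : ℝ) - z.re = 3 + (-z.re) by ring, Real.rpow_add (by norm_num)]
      norm_num
    rw [h8]
    -- (n+2)^(3-z.re) ≤ 2^(3-z.re) since 3 - z.re ≤ 0
    have hexp : 3 - z.re ≤ 0 := by linarith
    rw [show (3:ℝ) - z.re = -(z.re - 3) by ring, Real.rpow_neg h0.le,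
      Real.rpow_neg (by norm_num : (0:ℝ) ≤ 2)]
    refine inv_anti₀ (by positivity) ?_
    exact Real.rpow_le_rpow (by norm_num) hb (by linarith)
  have hsummable : Summable (fun n : ℕ => ‖((n : ℂ) + 2) ^ (-z)‖) := by
    refine Summable.of_nonneg_of_le (fun n => norm_nonneg _) hterm ?_
    exact (summable_nat2_rpow (by norm_num : (1:ℝ) < 3)).mul_right _
  calc ‖riemannZeta z - 1‖ = ‖∑' n : ℕ, ((n : ℂ) + 2) ^ (-z)‖ := by rw [hs.tsum_eq]
    _ ≤ ∑' n : ℕ, ‖((n : ℂ) + 2) ^ (-z)‖ := norm_tsum_le_tsum_norm hsummable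
    _ ≤ ∑' n : ℕ, ((n : ℝ) + 2) ^ (-(3:ℝ)) * (8 * (2:ℝ) ^ (-z.re)) := by
        refine Summable.tsum_le_tsum hterm hsummable ?_
        exact (summable_nat2_rpow (by norm_num : (1:ℝ) < 3)).mul_right _
    _ = zC * (2:ℝ) ^ (-z.re) := by
        rw [tsum_mul_right]
        unfold zC
        ring

lemma norm_nat1_cpow (n : ℕ) (w : ℂ) : ‖((n : ℂ) + 1) ^ w‖ = ((n : ℝ) + 1) ^ w.re := by
  have h : ((n : ℂ) + 1) = (((n : ℝ) + 1 : ℝ) : ℂ) := by push_cast; ring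
  rw [h, Complex.norm_cpow_eq_rpow_re_of_pos (by positivity)]

lemma point_bound (σ : ℝ) (hσ : 0 ≤ σ) (k n : ℕ) :
    ((n:ℝ)+2) ^ (-((k:ℝ)+σ)) ≤ ((n:ℝ)+2) ^ (-σ) * (1/2:ℝ)^k := by
  have h0 : (0:ℝ) < (n:ℝ) + 2 := by positivity
  have hb : (2:ℝ) ≤ (n:ℝ) + 2 := by
    have := Nat.cast_nonneg (α := ℝ) n; linarith
  have hsplit : ((n:ℝ)+2) ^ (-((k:ℝ)+σ)) = ((n:ℝ)+2) ^ (-σ) * ((n:ℝ)+2) ^ (-(k:ℝ)) := by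
    rw [← Real.rpow_add h0]; ring_nf
  rw [hsplit]
  refine mul_le_mul_of_nonneg_left ?_ (by positivity)
  rw [Real.rpow_neg h0.le, Real.rpow_natCast]
  rw [one_div, inv_pow]
  refine inv_anti₀ (by positivity) ?_
  exact pow_le_pow_left₀ (by norm_num) hb k

/-- The evaluation of the series for `re s > 2`, via Fubini and telescoping. -/
lemma eval_hasSum {s : ℂ} (hs : 2 < s.re) :
    HasSum (fun k : ℕ => pm (s - 1) (k + 1) * (riemannZeta ((k:ℂ) + s) - 1)) 1 := by
  set a : ℂ := s - 1 with hadef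
  set σ : ℝ := s.re with hσdef
  set κ : ℝ := max 1 ‖a‖ with hκdef
  have hκ1 : 1 ≤ κ := le_max_left _ _
  have hκa : ‖a‖ ≤ κ := le_max_right _ _
  set T : ℕ × ℕ → ℂ := fun p => pm a (p.1 + 1) * ((p.2 : ℂ) + 2) ^ (-((p.1 : ℂ) + s))
    with hTdef
  have hre : ∀ k : ℕ, ((k:ℂ) + s).re = (k:ℝ) + σ := by
    intro k; simp [Complex.add_re, hσdef]
  have hnormT : ∀ p : ℕ × ℕ, ‖T p‖ = ‖pm a (p.1 + 1)‖ * ((p.2 : ℝ) + 2) ^ (-((p.1:ℝ) + σ)) := by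
    intro p
    rw [hTdef]
    simp only []
    rw [norm_mul, norm_nat2_cpow, Complex.neg_re, hre]
  have hkσ : ∀ k : ℕ, 1 < (k:ℝ) + σ := by
    intro k
    have := Nat.cast_nonneg (α := ℝ) k; simp only [hσdef]; linarith
  -- summability of the double series
  have hTnorm : Summable (fun p : ℕ × ℕ => ‖T p‖) := by
    rw [summable_prod_of_nonneg (fun p => norm_nonneg _)]
    constructor
    · intro k
      refine Summable.congr (((summable_nat2_rpow (hkσ k)).mul_left ‖pm a (k+1)‖)) ?_
      intro n
      rw [hnormT (k, n)]
    · refine Summable.of_nonneg_of_le (fun k => tsum_nonneg fun n => norm_nonneg _)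
        (fun k => ?_)
        (((summable_poly_geom' (κ := κ) (b := 2) (r := 1/2) (by linarith) (by norm_num)
          (by norm_num) (by norm_num)).mul_left
          (∑' n : ℕ, ((n:ℝ)+2) ^ (-σ))))
      have hrow : (∑' n : ℕ, ‖T (k, n)‖)
          = ‖pm a (k+1)‖ * ∑' n : ℕ, ((n:ℝ)+2) ^ (-((k:ℝ)+σ)) := by
        rw [← tsum_mul_left]
        exact tsum_congr fun n => hnormT (k, n)
      rw [hrow]
      have hS0 : Summable (fun n : ℕ => ((n:ℝ)+2) ^ (-σ)) := summable_nat2_rpow (by linarith)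
      have htsum_le : (∑' n : ℕ, ((n:ℝ)+2) ^ (-((k:ℝ)+σ)))
          ≤ (∑' n : ℕ, ((n:ℝ)+2) ^ (-σ)) * (1/2:ℝ)^k := by
        rw [← tsum_mul_right]
        refine Summable.tsum_le_tsum (fun n => point_bound σ (by linarith) k n)
          (summable_nat2_rpow (hkσ k)) (hS0.mul_right _)
      have hpmle : ‖pm a (k+1)‖ ≤ ((k:ℝ)+2) ^ κ := by
        have := norm_pm_le hκ1 hκa (k+1)
        push_cast at this
        convert this using 2
        ring
      have h1 : (0:ℝ) ≤ ‖pm a (k+1)‖ := norm_nonneg _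
      have h2 : (0:ℝ) ≤ (∑' n : ℕ, ((n:ℝ)+2) ^ (-σ)) * (1/2:ℝ)^k := by
        have h2' : (0:ℝ) ≤ ∑' n : ℕ, ((n:ℝ)+2) ^ (-σ) := tsum_nonneg fun n => by positivity
        exact mul_nonneg h2' (by positivity)
      calc ‖pm a (k+1)‖ * ∑' n : ℕ, ((n:ℝ)+2) ^ (-((k:ℝ)+σ))
          ≤ ((k:ℝ)+2) ^ κ * ((∑' n : ℕ, ((n:ℝ)+2) ^ (-σ)) * (1/2:ℝ)^k) := by
            refine mul_le_mul hpmle htsum_le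
              (tsum_nonneg fun n => by positivity) (by positivity)
        _ = (∑' n : ℕ, ((n:ℝ)+2) ^ (-σ)) * (((k:ℝ)+2) ^ κ * (1/2:ℝ)^k) := by ring
  have hT : Summable T := Summable.of_norm hTnorm
  have hS := hT.hasSum
  set S : ℂ := ∑' p, T p with hSdef
  -- rows
  have hrowC : ∀ k : ℕ, HasSum (fun n => T (k, n)) (pm a (k+1) * (riemannZeta ((k:ℂ) + s) - 1)) := by
    intro k
    have h1 : 1 < ((k:ℂ) + s).re := by rw [hre]; exact hkσ k
    exact (zeta_sub_one_hasSum h1).mul_left _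
  -- columns
  set gg : ℕ → ℂ := fun n => ((n : ℂ) + 1) ^ ((1:ℂ) - s) with hggdef
  have hcolC : ∀ n : ℕ, HasSum (fun k => T (k, n)) (gg n - gg (n+1)) := by
    intro n
    have hm0 : ((n:ℂ) + 2) ≠ 0 := by
      intro h
      have := congrArg Complex.re h
      simp at this
      have := Nat.cast_nonneg (α := ℝ) n
      linarith
    set x : ℝ := 1 / ((n:ℝ) + 2) with hxdef
    have hx0 : 0 ≤ x := by positivity
    have hx1 : x ≤ 1/2 := by
      rw [hxdef]
      rw [div_le_div_iff₀ (by positivity) (by norm_num)]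
      have := Nat.cast_nonneg (α := ℝ) n; linarith
    have hb := binom_hasSum a hx0 hx1
    have hb1 : HasSum (fun k => pm a (k+1) * ((x:ℂ))^(k+1)) ((((1 - x : ℝ)):ℂ) ^ (-a) - 1) := by
      refine (hasSum_nat_add_iff (f := fun k : ℕ => pm a k * ((x:ℂ))^k)
        (g := (((1 - x : ℝ)):ℂ) ^ (-a) - 1) 1).mpr ?_
      have : (((1 - x : ℝ)):ℂ) ^ (-a) - 1 + ∑ i ∈ Finset.range 1, pm a i * ((x:ℂ))^i
          = (((1 - x : ℝ)):ℂ) ^ (-a) := by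
        simp [pm_zero]
      rw [this]
      exact hb
    have h2 := hb1.mul_left (((n:ℂ) + 2) ^ ((1:ℂ) - s))
    have hterm : ∀ k : ℕ, ((n:ℂ) + 2) ^ ((1:ℂ) - s) * (pm a (k+1) * ((x:ℂ))^(k+1))
        = T (k, n) := by
      intro k
      rw [hTdef]
      simp only []
      have hxc : ((x:ℂ)) = ((n:ℂ) + 2)⁻¹ := by
        rw [hxdef]
        push_cast
        rw [one_div]
      have hpow : ((n:ℂ) + 2) ^ ((1:ℂ) - s) * ((x:ℂ))^(k+1) = ((n:ℂ) + 2) ^ (-((k:ℂ) + s)) := by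
        rw [hxc, inv_pow, ← Complex.cpow_natCast ((n:ℂ) + 2) (k+1), ← Complex.cpow_neg,
          ← Complex.cpow_add _ _ hm0]
        congr 1
        push_cast
        ring
      calc ((n:ℂ) + 2) ^ ((1:ℂ) - s) * (pm a (k+1) * ((x:ℂ))^(k+1))
          = pm a (k+1) * (((n:ℂ) + 2) ^ ((1:ℂ) - s) * ((x:ℂ))^(k+1)) := by ring
        _ = pm a (k+1) * ((n:ℂ) + 2) ^ (-((k:ℂ) + s)) := by rw [hpow]
    have hval : ((n:ℂ) + 2) ^ ((1:ℂ) - s) * ((((1 - x : ℝ)):ℂ) ^ (-a) - 1)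
        = gg n - gg (n+1) := by
      have hna : -a = (1:ℂ) - s := by rw [hadef]; ring
      have h1x : (1 - x : ℝ) = ((n:ℝ)+1) / ((n:ℝ)+2) := by
        rw [hxdef]
        field_simp
        ring
      have hmul : (((n:ℝ) + 2 : ℝ):ℂ) ^ ((1:ℂ) - s) * ((((n:ℝ)+1) / ((n:ℝ)+2) : ℝ):ℂ) ^ ((1:ℂ) - s)
          = ((((n:ℝ) + 1 : ℝ)):ℂ) ^ ((1:ℂ) - s) := by
        rw [← mul_cpow_ofReal_nonneg (by positivity) (by positivity)]
        congr 2
        push_cast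
        field_simp
      rw [hna, h1x]
      have hc1 : ((n:ℂ) + 2) = (((n:ℝ) + 2 : ℝ):ℂ) := by push_cast; ring
      have hc2 : ((n:ℂ) + 1) = (((n:ℝ) + 1 : ℝ):ℂ) := by push_cast; ring
      rw [mul_sub, mul_one, hc1]
      rw [hmul]
      rw [hggdef]
      simp only []
      congr 1
      · rw [hc2]
      · push_cast; ring_nf
    rw [← hval]
    exact h2.congr_fun fun k => (hterm k).symm
  -- Fubini
  have h_rows : HasSum (fun k => pm a (k+1) * (riemannZeta ((k:ℂ) + s) - 1)) S :=
    hS.prod_fiberwise hrowC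
  have hswap : HasSum (fun p : ℕ × ℕ => T (p.2, p.1)) S := by
    have := ((Equiv.prodComm ℕ ℕ).hasSum_iff (f := T) (a := S)).mpr hS
    exact this.congr_fun fun p => rfl
  have h_cols : HasSum (fun n => gg n - gg (n+1)) S := hswap.prod_fiberwise hcolC
  -- telescoping
  have htel : Tendsto (fun N => gg 0 - gg N) atTop (𝓝 S) := by
    have h := h_cols.tendsto_sum_nat
    exact h.congr fun N => Finset.sum_range_sub' gg N
  have hto0 : Tendsto gg atTop (𝓝 0) := by
    rw [tendsto_zero_iff_norm_tendsto_zero]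
    have hnorm : ∀ n : ℕ, ‖gg n‖ = ((n:ℝ)+1) ^ ((1:ℝ) - σ) := by
      intro n
      rw [hggdef]
      simp only []
      rw [norm_nat1_cpow, Complex.sub_re, Complex.one_re, hσdef]
    have hlim : Tendsto (fun n : ℕ => ((n:ℝ)+1) ^ (-(σ - 1))) atTop (𝓝 0) := by
      have h1 : Tendsto (fun n : ℕ => (n:ℝ) + 1) atTop atTop :=
        tendsto_atTop_add_const_right atTop 1 tendsto_natCast_atTop_atTop
      exact (tendsto_rpow_neg_atTop (by linarith : (0:ℝ) < σ - 1)).comp h1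
    refine Tendsto.congr (fun n => ?_) hlim
    rw [hnorm n]
    congr 1
    ring
  have hS1 : S = 1 := by
    have hlim2 : Tendsto (fun N => gg 0 - gg N) atTop (𝓝 (gg 0 - 0)) :=
      tendsto_const_nhds.sub hto0
    have := tendsto_nhds_unique htel hlim2
    rw [this, sub_zero, hggdef]
    simp only []
    rw [show ((0:ℕ):ℂ) + 1 = 1 by push_cast; ring, Complex.one_cpow]
  exact hS1 ▸ h_rows





noncomputable def FF : ℂ → ℂ :=
  fun s => ∑' k : ℕ, pm (s - 1) (k + 1) * (riemannZeta ((k:ℂ) + s) - 1)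

def Ugood : Set ℂ := ({1} ∪ Set.range (fun m : ℕ => -(m:ℂ)))ᶜ

lemma mem_Ugood {s : ℂ} : s ∈ Ugood ↔ s ≠ 1 ∧ ∀ m : ℕ, s ≠ -(m:ℂ) := by
  simp only [Ugood, Set.mem_compl_iff, Set.mem_union, Set.mem_singleton_iff,
    Set.mem_range, not_or, not_exists]
  constructor
  · rintro ⟨h1, h2⟩
    exact ⟨h1, fun m hm => h2 m hm.symm⟩
  · rintro ⟨h1, h2⟩
    exact ⟨h1, fun m hm => h2 m hm.symm⟩

lemma Ugood_open : IsOpen Ugood := by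
  rw [Ugood, isOpen_compl_iff]
  refine IsClosed.union isClosed_singleton ?_
  have h1 : IsClosed (Set.range ((↑) : ℕ → ℝ)) :=
    Nat.isClosedEmbedding_coe_real.isClosed_range
  have h2 : IsClosed (Set.range (fun m : ℕ => -(m:ℝ))) := by
    have heq : Set.range (fun m : ℕ => -(m:ℝ)) = Neg.neg ⁻¹' (Set.range ((↑) : ℕ → ℝ)) := by
      ext x
      simp only [Set.mem_range, Set.mem_preimage]
      constructor
      · rintro ⟨m, hm⟩; exact ⟨m, by rw [← hm]; ring⟩
      · rintro ⟨m, hm⟩; exact ⟨m, by rw [hm]; ring⟩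
    rw [heq]
    exact h1.preimage continuous_neg
  have h3 : Set.range (fun m : ℕ => -(m:ℂ)) =
      Complex.ofReal '' (Set.range (fun m : ℕ => -(m:ℝ))) := by
    ext z
    simp only [Set.mem_range, Set.mem_image]
    constructor
    · rintro ⟨m, hm⟩
      exact ⟨-(m:ℝ), ⟨m, rfl⟩, by rw [← hm]; push_cast; ring⟩
    · rintro ⟨x, ⟨m, hm⟩, hx⟩
      exact ⟨m, by rw [← hx, ← hm]; push_cast; ring⟩
  rw [h3]
  exact (Complex.isometry_ofReal.isClosedEmbedding.isClosedMap) _ h2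

lemma Ugood_preconnected : IsPreconnected Ugood := by
  have hc : ({1} ∪ Set.range (fun m : ℕ => -(m:ℂ)) : Set ℂ).Countable :=
    (Set.countable_singleton 1).union (Set.countable_range _)
  refine ((hc.isConnected_compl_of_one_lt_rank ?_).isPreconnected)
  rw [rank_real_complex]
  norm_num

lemma re_mem_Ugood {s : ℂ} (hs : 2 < s.re) : s ∈ Ugood := by
  rw [mem_Ugood]
  constructor
  · intro h; rw [h] at hs; simp at hs
  · intro m h
    rw [h] at hs
    simp only [Complex.neg_re, Complex.natCast_re] at hs
    have := Nat.cast_nonneg (α := ℝ) m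
    linarith

lemma shift_ne_one {s : ℂ} (hs : s ∈ Ugood) (i : ℕ) : (i:ℂ) + s ≠ 1 := by
  rw [mem_Ugood] at hs
  intro h
  match i with
  | 0 => exact hs.1 (by simpa using h)
  | (j+1) =>
    refine hs.2 j ?_
    have h' : ((j:ℂ) + 1) + s = 1 := by push_cast at h; exact h
    have : s = 1 - ((j:ℂ) + 1) := by linear_combination h'
    rw [this]; ring

lemma pm_differentiable (m : ℕ) : Differentiable ℂ (fun s : ℂ => pm (s - 1) m) := by
  intro s
  unfold pm
  refine DifferentiableAt.div_const ?_ _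
  refine DifferentiableAt.fun_finsetProd fun j _ => ?_
  exact (differentiableAt_id.sub_const 1).add_const (j:ℂ)

lemma local_diff (s₀ : ℂ) (h : s₀ ∈ Ugood) :
    Summable (fun k : ℕ => pm (s₀ - 1) (k + 1) * (riemannZeta ((k:ℂ) + s₀) - 1)) ∧
    DifferentiableAt ℂ FF s₀ := by
  obtain ⟨ε, hε0, hball⟩ := Metric.isOpen_iff.mp Ugood_open s₀ h
  set δ : ℝ := min (ε/2) 1 with hδdef
  have hδ0 : 0 < δ := lt_min (by linarith) one_pos
  have hδ1 : δ ≤ 1 := min_le_right _ _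
  have hδball : Metric.ball s₀ δ ⊆ Ugood := fun z hz =>
    hball (Metric.ball_subset_ball (by linarith [min_le_left (ε/2) (1:ℝ)]) hz)
  set K : ℕ := ⌈4 - s₀.re⌉₊ with hKdef
  have hK : (4 : ℝ) - s₀.re ≤ K := Nat.le_ceil _
  set κ : ℝ := max 1 (‖s₀ - 1‖ + 1) with hκdef
  have hκ1 : 1 ≤ κ := le_max_left _ _
  have hκs : ∀ s ∈ Metric.ball s₀ δ, ‖s - 1‖ ≤ κ := by
    intro s hs
    have h1 : ‖s - s₀‖ < δ := by
      rw [Metric.mem_ball, dist_eq_norm] at hs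
      exact hs
    calc ‖s - 1‖ = ‖(s₀ - 1) + (s - s₀)‖ := by ring_nf
      _ ≤ ‖s₀ - 1‖ + ‖s - s₀‖ := norm_add_le _ _
      _ ≤ ‖s₀ - 1‖ + 1 := by linarith
      _ ≤ κ := le_max_right _ _
  have hre : ∀ s ∈ Metric.ball s₀ δ, ∀ k : ℕ, (k:ℝ) + 3 ≤ (((k + K : ℕ):ℂ) + s).re := by
    intro s hs k
    have h1 : |s.re - s₀.re| ≤ ‖s - s₀‖ := by
      rw [← Complex.sub_re]
      exact Complex.abs_re_le_norm _
    have h2 : ‖s - s₀‖ < δ := by rwa [Metric.mem_ball, dist_eq_norm] at hs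
    have h3 : s₀.re - 1 ≤ s.re := by
      have := abs_le.mp h1
      linarith [this.1]
    have : (((k + K : ℕ):ℂ) + s).re = (k:ℝ) + (K:ℝ) + s.re := by
      simp only [Complex.add_re, Complex.natCast_re]
      push_cast
      ring
    rw [this]
    linarith
  -- the tail functions and bound
  set G : ℕ → ℂ → ℂ := fun k s => pm (s - 1) (k + K + 1) *
    (riemannZeta (((k + K : ℕ):ℂ) + s) - 1) with hGdef
  set u : ℕ → ℝ := fun k => zC * (((k:ℝ) + ((K:ℝ) + 2)) ^ κ * (1/2:ℝ)^k) with hudef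
  have hu : Summable u := by
    refine Summable.mul_left _ ?_
    refine summable_poly_geom' (by linarith) ?_ (by norm_num) (by norm_num)
    have := Nat.cast_nonneg (α := ℝ) K
    linarith
  have hGle : ∀ (k : ℕ) (s : ℂ), s ∈ Metric.ball s₀ δ → ‖G k s‖ ≤ u k := by
    intro k s hs
    have hre1 := hre s hs k
    have h3le : (3:ℝ) ≤ (((k + K : ℕ):ℂ) + s).re := by
      have := Nat.cast_nonneg (α := ℝ) k
      linarith
    have hz := zeta_sub_one_norm_le h3le
    have hpm : ‖pm (s - 1) (k + K + 1)‖ ≤ ((k:ℝ) + ((K:ℝ) + 2)) ^ κ := by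
      have := norm_pm_le hκ1 (hκs s hs) (k + K + 1)
      push_cast at this
      convert this using 2
      ring
    have hpow : (2:ℝ) ^ (-(((k + K : ℕ):ℂ) + s).re) ≤ (1/2:ℝ)^k := by
      have h1 : (2:ℝ) ^ (-(((k + K : ℕ):ℂ) + s).re) ≤ (2:ℝ) ^ (-((k:ℝ) + 3)) :=
        Real.rpow_le_rpow_of_exponent_le (by norm_num) (by linarith)
      have h2 : (2:ℝ) ^ (-((k:ℝ) + 3)) ≤ (2:ℝ) ^ (-(k:ℝ)) :=
        Real.rpow_le_rpow_of_exponent_le (by norm_num) (by linarith)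
      have h3 : (2:ℝ) ^ (-(k:ℝ)) = (1/2:ℝ)^k := by
        rw [Real.rpow_neg (by norm_num), Real.rpow_natCast, one_div, inv_pow]
      linarith
    calc ‖G k s‖ = ‖pm (s - 1) (k + K + 1)‖ * ‖riemannZeta (((k + K : ℕ):ℂ) + s) - 1‖ := by
          rw [hGdef]; exact norm_mul _ _
      _ ≤ ((k:ℝ) + ((K:ℝ) + 2)) ^ κ * (zC * (2:ℝ) ^ (-(((k + K : ℕ):ℂ) + s).re)) := by
          refine mul_le_mul hpm hz (norm_nonneg _) (by positivity)
      _ ≤ ((k:ℝ) + ((K:ℝ) + 2)) ^ κ * (zC * (1/2:ℝ)^k) := by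
          refine mul_le_mul_of_nonneg_left ?_ (by positivity)
          exact mul_le_mul_of_nonneg_left hpow zC_nonneg
      _ = u k := by rw [hudef]; ring
  have hGdiff : ∀ k : ℕ, DifferentiableOn ℂ (G k) (Metric.ball s₀ δ) := by
    intro k
    intro s hs
    refine DifferentiableAt.differentiableWithinAt ?_
    refine DifferentiableAt.mul ((pm_differentiable (k + K + 1)) s) ?_
    refine DifferentiableAt.sub_const ?_ 1
    have hne : (((k + K : ℕ):ℂ) + s) ≠ 1 := by
      intro hcon
      have hcon' : ((((k + K : ℕ):ℂ) + s)).re = (1:ℂ).re := by rw [hcon]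
      rw [Complex.one_re] at hcon'
      have h3le := hre s hs k
      have hk0 := Nat.cast_nonneg (α := ℝ) k
      rw [hcon'] at h3le
      linarith
    exact (differentiableAt_riemannZeta hne).comp s
      ((differentiableAt_const _).add differentiableAt_id)
  have hsum_tail : ∀ s ∈ Metric.ball s₀ δ, Summable (fun k => G k s) := fun s hs =>
    Summable.of_norm (Summable.of_nonneg_of_le (fun k => norm_nonneg _)
      (fun k => hGle k s hs) hu)
  have hsum_full : ∀ s ∈ Metric.ball s₀ δ,
      Summable (fun k : ℕ => pm (s - 1) (k + 1) * (riemannZeta ((k:ℂ) + s) - 1)) := by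
    intro s hs
    refine (summable_nat_add_iff
      (f := fun k : ℕ => pm (s - 1) (k + 1) * (riemannZeta ((k:ℂ) + s) - 1)) K).mp ?_
    refine (hsum_tail s hs).congr fun k => ?_
    rw [hGdef]
  have hsplit : ∀ s ∈ Metric.ball s₀ δ, FF s =
      (∑ i ∈ Finset.range K, pm (s - 1) (i + 1) * (riemannZeta ((i:ℂ) + s) - 1))
        + ∑' k, G k s := by
    intro s hs
    rw [FF]
    exact (Summable.sum_add_tsum_nat_add K (hsum_full s hs)).symm
  have hballmem : Metric.ball s₀ δ ∈ 𝓝 s₀ := isOpen_ball.mem_nhds (mem_ball_self hδ0)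
  have hdiff2 : DifferentiableAt ℂ (fun s =>
      (∑ i ∈ Finset.range K, pm (s - 1) (i + 1) * (riemannZeta ((i:ℂ) + s) - 1))
        + ∑' k, G k s) s₀ := by
    refine DifferentiableAt.add ?_ ?_
    · refine DifferentiableAt.fun_sum fun i _ => ?_
      refine DifferentiableAt.mul ((pm_differentiable (i + 1)) s₀) ?_
      refine DifferentiableAt.sub_const ?_ 1
      exact (differentiableAt_riemannZeta (shift_ne_one h i)).comp s₀
        ((differentiableAt_const _).add differentiableAt_id)
    · have hd := differentiableOn_tsum_of_summable_norm hu hGdiff isOpen_ball hGle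
      exact (hd s₀ (mem_ball_self hδ0)).differentiableAt hballmem
  constructor
  · exact hsum_full s₀ (mem_ball_self hδ0)
  · have hev : FF =ᶠ[𝓝 s₀] (fun s =>
      (∑ i ∈ Finset.range K, pm (s - 1) (i + 1) * (riemannZeta ((i:ℂ) + s) - 1))
        + ∑' k, G k s) := eventually_of_mem hballmem (fun s hs => hsplit s hs)
    exact (Filter.EventuallyEq.differentiableAt_iff hev).mpr hdiff2

lemma main_hasSum (s : ℂ) (hs1 : s ≠ 1) (hs2 : ∀ m : ℕ, s ≠ -(m:ℂ)) :
    HasSum (fun k : ℕ => pm (s - 1) (k + 1) * (riemannZeta ((k:ℂ) + s) - 1)) 1 := by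
  have hsU : s ∈ Ugood := mem_Ugood.mpr ⟨hs1, hs2⟩
  have hF : AnalyticOnNhd ℂ FF Ugood :=
    DifferentiableOn.analyticOnNhd
      (fun t ht => (local_diff t ht).2.differentiableWithinAt) Ugood_open
  have hG : AnalyticOnNhd ℂ (fun _ => (1:ℂ)) Ugood := analyticOnNhd_const
  have h3 : (3:ℂ) ∈ Ugood := re_mem_Ugood (by norm_num)
  have hV : {z : ℂ | 2 < z.re} ∈ 𝓝 (3:ℂ) := by
    refine (isOpen_Ioi.preimage Complex.continuous_re).mem_nhds ?_
    norm_num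
  have hFG : FF =ᶠ[𝓝 (3:ℂ)] (fun _ => (1:ℂ)) :=
    eventually_of_mem hV fun t ht => by
      simpa [FF] using (eval_hasSum ht).tsum_eq
  have heq := hF.eqOn_of_preconnected_of_eventuallyEq hG Ugood_preconnected h3 hFG hsU
  have hsm := (local_diff s hsU).1
  have hh := hsm.hasSum
  rw [show (∑' k : ℕ, pm (s - 1) (k + 1) * (riemannZeta ((k:ℂ) + s) - 1)) = FF s from rfl,
    heq] at hh
  exact hh

/-- Let `s` be a complex number not equal to `1` and not a nonpositive integer. Then the
series `∑_{k=1}^∞ (-1)^k binom(1-s, k) (ζ(k+s-1) - 1)` converges and its sum equals `1`. -/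
theorem stmt_8 (s : ℂ) (hs1 : s ≠ 1) (hs2 : ∀ m : ℕ, s ≠ -(m : ℂ)) :
    Summable (fun k : ℕ =>
      (-1 : ℂ) ^ (k + 1) * cbinom (1 - s) (k + 1) * (riemannZeta (((k : ℂ) + 1) + s - 1) - 1)) ∧
    ∑' k : ℕ, (-1 : ℂ) ^ (k + 1) * cbinom (1 - s) (k + 1) *
      (riemannZeta (((k : ℂ) + 1) + s - 1) - 1) = 1 := by
  have h := main_hasSum s hs1 hs2
  have hcongr : ∀ k : ℕ, (-1:ℂ)^(k+1) * cbinom (1-s) (k+1) *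
      (riemannZeta (((k:ℂ)+1)+s-1) - 1)
      = pm (s-1) (k+1) * (riemannZeta ((k:ℂ)+s) - 1) := by
    intro k
    have harg : ((k:ℂ)+1)+s-1 = (k:ℂ)+s := by ring
    rw [harg]
    congr 1
    rw [cbinom, pm]
    rw [show ((-1:ℂ)^(k+1)) * ((∏ j ∈ Finset.range (k+1), ((1-s) - j)) /
        ((Nat.factorial (k+1) : ℕ) : ℂ))
        = ((-1:ℂ)^(k+1) * ∏ j ∈ Finset.range (k+1), ((1-s) - j)) /
        ((Nat.factorial (k+1) : ℕ) : ℂ) from by ring]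
    congr 1
    calc (-1:ℂ)^(k+1) * ∏ j ∈ Finset.range (k+1), ((1-s) - j)
        = ∏ j ∈ Finset.range (k+1), ((-1) * ((1-s) - (j:ℂ))) := by
          rw [Finset.prod_mul_distrib, Finset.prod_const, Finset.card_range]
      _ = ∏ j ∈ Finset.range (k+1), ((s - 1) + (j:ℂ)) := by
          refine Finset.prod_congr rfl fun j _ => ?_
          ring
  have h2 : HasSum (fun k : ℕ => (-1:ℂ)^(k+1) * cbinom (1-s) (k+1) *
      (riemannZeta (((k:ℂ)+1)+s-1) - 1)) 1 :=
    h.congr_fun fun k => hcongr k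
  exact ⟨h2.summable, h2.tsum_eq⟩
end

section
/- For every natural number n ≥ 0 (corresponding to the nonpositive integer s = -n), the finite sum ∑_{k=1}^{n+1} (-1)^k binom(n+1, k) · (ζ(k-n-1) - 1) equals (-1)^n/(n+2) + 1. -/
lemma rat_key (n : ℕ) :
    ∑ i ∈ Finset.range (n + 1), ((n + 1).choose i : ℚ) * bernoulli (i + 1) / (i + 1)
      = -1 / (n + 2) := by
  have hn2 : ((n : ℚ) + 2) ≠ 0 := by positivity
  rw [eq_div_iff hn2, Finset.sum_mul]
  have h1 : ∀ i ∈ Finset.range (n + 1),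
      ((n + 1).choose i : ℚ) * bernoulli (i + 1) / (i + 1) * ((n : ℚ) + 2)
        = ((n + 2).choose (i + 1) : ℚ) * bernoulli (i + 1) := by
    intro i _
    have h := Nat.add_one_mul_choose_eq (n + 1) i
    have h' : ((n + 2 : ℕ) : ℚ) * ((n + 1).choose i : ℚ)
        = ((n + 2).choose (i + 1) : ℚ) * ((i + 1 : ℕ) : ℚ) := by exact_mod_cast h
    push_cast at h'
    have hi : ((i : ℚ) + 1) ≠ 0 := by positivity
    field_simp
    linear_combination bernoulli (i + 1) * h'
  rw [Finset.sum_congr rfl h1]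
  have h2 := sum_bernoulli (n + 2)
  rw [Finset.sum_range_succ'] at h2
  simp only [Nat.choose_zero_right, Nat.cast_one, bernoulli_zero, one_mul,
    if_neg (by omega : n + 2 ≠ 1)] at h2
  linarith [h2]

lemma neg_one_pow_sub (n j : ℕ) (h : j ≤ n) : (-1 : ℂ) ^ (n - j) = (-1) ^ n * (-1) ^ j := by
  have h1 : (-1 : ℂ) ^ (n - j) * (-1) ^ j = (-1) ^ n := by
    rw [← pow_add]; congr 1; omega
  have h2 : (-1 : ℂ) ^ j * (-1) ^ j = 1 := by
    rw [← pow_add]; exact Even.neg_one_pow ⟨j, rfl⟩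
  calc (-1 : ℂ) ^ (n - j) = (-1 : ℂ) ^ (n - j) * ((-1) ^ j * (-1) ^ j) := by rw [h2, mul_one]
    _ = ((-1 : ℂ) ^ (n - j) * (-1) ^ j) * (-1) ^ j := by ring
    _ = (-1) ^ n * (-1) ^ j := by rw [h1]

/-- For every natural `n ≥ 0` (corresponding to the nonpositive integer `s = -n`),
`∑_{k=1}^{n+1} (-1)^k binom(n+1, k) (ζ(k-n-1) - 1) = (-1)^n/(n+2) + 1`. -/
theorem stmt_10 (n : ℕ) :
    ∑ k ∈ Finset.Icc 1 (n + 1),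
        (-1 : ℂ) ^ k * (Nat.choose (n + 1) k : ℂ) * (riemannZeta ((k : ℂ) - n - 1) - 1)
      = (-1 : ℂ) ^ n / ((n : ℂ) + 2) + 1 := by
  have hn2 : ((n : ℂ) + 2) ≠ 0 := by
    intro h
    have : ((n : ℂ) + 2) = ((n + 2 : ℕ) : ℂ) := by push_cast; ring
    rw [this] at h
    exact Nat.cast_ne_zero.mpr (by omega) h
  rw [← Finset.Ico_add_one_right_eq_Icc, Finset.sum_Ico_eq_sum_range]
  simp only [show n + 1 + 1 - 1 = n + 1 from rfl]
  rw [← Finset.sum_range_reflect]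
  have key : ∀ j ∈ Finset.range (n + 1),
      (-1 : ℂ) ^ (1 + (n + 1 - 1 - j)) * ((n + 1).choose (1 + (n + 1 - 1 - j)) : ℂ) *
          (riemannZeta (((1 + (n + 1 - 1 - j) : ℕ) : ℂ) - n - 1) - 1)
        = (-1 : ℂ) ^ (n + 1) * ((n + 1).choose j : ℂ) * ((bernoulli (j + 1) : ℂ) / ((j : ℂ) + 1))
          - (-1 : ℂ) ^ (n + 1) * (-1) ^ j * ((n + 1).choose j : ℂ) := by
    intro j hj
    have hjn : j ≤ n := by simpa [Nat.lt_succ_iff] using hj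
    have e1 : n + 1 - 1 - j = n - j := by omega
    have e2 : 1 + (n - j) = (n + 1) - j := by omega
    have e3 : (((1 + (n - j) : ℕ) : ℂ)) - n - 1 = -(j : ℂ) := by
      push_cast [Nat.cast_sub hjn]; ring
    rw [e1, e3, riemannZeta_neg_nat_eq_bernoulli, e2, Nat.choose_symm (by omega : j ≤ n + 1),
      neg_one_pow_sub (n + 1) j (by omega)]
    have hj1 : ((j : ℂ) + 1) ≠ 0 := by
      intro h
      have : ((j : ℂ) + 1) = ((j + 1 : ℕ) : ℂ) := by push_cast; ring
      rw [this] at h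
      exact Nat.cast_ne_zero.mpr (by omega) h
    have h2 : (-1 : ℂ) ^ j * (-1) ^ j = 1 := by
      rw [← pow_add]; exact Even.neg_one_pow ⟨j, rfl⟩
    linear_combination ((-1 : ℂ) ^ (n + 1) * ((n + 1).choose j : ℂ) *
      (bernoulli (j + 1) : ℂ) / ((j : ℂ) + 1)) * h2
  rw [Finset.sum_congr rfl key, Finset.sum_sub_distrib]
  have hA : ∑ j ∈ Finset.range (n + 1),
      (-1 : ℂ) ^ (n + 1) * ((n + 1).choose j : ℂ) * ((bernoulli (j + 1) : ℂ) / ((j : ℂ) + 1))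
        = (-1 : ℂ) ^ (n + 1) * (-1 / ((n : ℂ) + 2)) := by
    have hc := congrArg (fun q : ℚ => (q : ℂ)) (rat_key n)
    push_cast at hc
    calc ∑ j ∈ Finset.range (n + 1),
        (-1 : ℂ) ^ (n + 1) * ((n + 1).choose j : ℂ) * ((bernoulli (j + 1) : ℂ) / ((j : ℂ) + 1))
        = (-1 : ℂ) ^ (n + 1) * ∑ j ∈ Finset.range (n + 1),
            ((n + 1).choose j : ℂ) * (bernoulli (j + 1) : ℂ) / ((j : ℂ) + 1) := by
          rw [Finset.mul_sum]; exact Finset.sum_congr rfl fun j _ => by ring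
      _ = (-1 : ℂ) ^ (n + 1) * (-1 / ((n : ℂ) + 2)) := by rw [hc]
  have hB : ∑ j ∈ Finset.range (n + 1),
      (-1 : ℂ) ^ (n + 1) * (-1) ^ j * ((n + 1).choose j : ℂ)
        = (-1 : ℂ) ^ (n + 1) * (-(-1 : ℂ) ^ (n + 1)) := by
    have h0 : ∑ j ∈ Finset.range (n + 2), (-1 : ℂ) ^ j * ((n + 1).choose j : ℂ) = 0 := by
      have := Int.alternating_sum_range_choose_of_ne (n := n + 1) (by omega)
      exact_mod_cast congrArg (fun z : ℤ => (z : ℂ)) this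
    rw [Finset.sum_range_succ] at h0
    simp only [Nat.choose_self, Nat.cast_one, mul_one] at h0
    calc ∑ j ∈ Finset.range (n + 1), (-1 : ℂ) ^ (n + 1) * (-1) ^ j * ((n + 1).choose j : ℂ)
        = (-1 : ℂ) ^ (n + 1) * ∑ j ∈ Finset.range (n + 1), (-1 : ℂ) ^ j * ((n + 1).choose j : ℂ) := by
          rw [Finset.mul_sum]; exact Finset.sum_congr rfl fun j _ => by ring
      _ = (-1 : ℂ) ^ (n + 1) * (-(-1 : ℂ) ^ (n + 1)) := by rw [show ∑ j ∈ Finset.range (n + 1), (-1 : ℂ) ^ j * ((n + 1).choose j : ℂ) = -(-1 : ℂ) ^ (n + 1) from by linear_combination h0]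
  rw [hA, hB]
  have h2 : (-1 : ℂ) ^ (n + 1) * (-1) ^ (n + 1) = 1 := by
    rw [← pow_add]; exact Even.neg_one_pow ⟨n + 1, rfl⟩
  have hpow : (-1 : ℂ) ^ (n + 1) = -(-1 : ℂ) ^ n := by rw [pow_succ]; ring
  have h3 : (-1 : ℂ) ^ n * (-1) ^ n = 1 := by
    rw [← pow_add]; exact Even.neg_one_pow ⟨n, rfl⟩
  have h3' : (-1 : ℂ) ^ (n * 2) = 1 := Even.neg_one_pow ⟨n, by ring⟩
  rw [hpow]
  linear_combination -h3 + 2 * h3'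
end

section
/- For every complex number s with Re(s) < 0, the integral ∫₀^∞ t^{-s}/(e^{2πt} - 1) dt converges and ζ(s) = 2 sin(πs/2) · ∫₀^∞ t^{-s}/(e^{2πt} - 1) dt. -/
open MeasureTheory Real
open Complex Set Filter Asymptotics Topology

noncomputable def F (t : ℝ) : ℂ := 1 / (Complex.exp (2 * Real.pi * t) - 1)

lemma exp_ne_one {t : ℝ} (ht : 0 < t) : Complex.exp (2 * Real.pi * t) - 1 ≠ 0 := by
  have h1 : (1:ℝ) < Real.exp (2 * Real.pi * t) := by
    rw [Real.one_lt_exp_iff]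
    positivity
  have : Complex.exp (2 * Real.pi * t) = (Real.exp (2 * Real.pi * t) : ℂ) := by
    push_cast [Complex.ofReal_exp]
    norm_num
  rw [this, sub_ne_zero]
  exact_mod_cast h1.ne'

lemma F_real (t : ℝ) : F t = ((1 / (Real.exp (2 * Real.pi * t) - 1) : ℝ) : ℂ) := by
  have : Complex.exp (2 * Real.pi * t) = (Real.exp (2 * Real.pi * t) : ℂ) := by
    push_cast [Complex.ofReal_exp]; norm_num
  rw [F, this]
  push_cast
  ring

lemma F_norm {t : ℝ} (ht : 0 < t) : ‖F t‖ = 1 / (Real.exp (2 * Real.pi * t) - 1) := by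
  rw [F_real, Complex.norm_real, Real.norm_eq_abs, abs_of_pos]
  have h1 : (1:ℝ) < Real.exp (2 * Real.pi * t) := by
    rw [Real.one_lt_exp_iff]; positivity
  have h2 := sub_pos.mpr h1
  positivity


lemma F_bot : F =O[𝓝[>] (0:ℝ)] (fun t : ℝ => t ^ (-1 : ℝ)) := by
  rw [Asymptotics.isBigO_iff]
  refine ⟨(2 * Real.pi)⁻¹, ?_⟩
  filter_upwards [self_mem_nhdsWithin] with t (ht : 0 < t)
  rw [F_norm ht, Real.norm_eq_abs, Real.rpow_neg_one, abs_of_pos (by positivity)]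
  have h2 : 2 * Real.pi * t ≤ Real.exp (2 * Real.pi * t) - 1 := by
    have := Real.add_one_le_exp (2 * Real.pi * t)
    linarith
  have h3 : (0:ℝ) < 2 * Real.pi * t := by positivity
  calc 1 / (Real.exp (2 * Real.pi * t) - 1) ≤ 1 / (2 * Real.pi * t) :=
        one_div_le_one_div_of_le h3 h2
    _ = (2 * Real.pi)⁻¹ * t⁻¹ := by rw [one_div, mul_inv]

lemma F_top (a : ℝ) : F =O[atTop] (fun t : ℝ => t ^ (-a)) := by
  rw [Asymptotics.isBigO_iff]
  refine ⟨1, ?_⟩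
  have h1 : (fun t : ℝ => t ^ a) =o[atTop] (fun t => Real.exp (2 * Real.pi * t)) :=
    isLittleO_rpow_exp_pos_mul_atTop a (by positivity)
  filter_upwards [h1.bound (by norm_num : (0:ℝ) < 1/2), eventually_ge_atTop (1:ℝ)]
    with t h4 ht1
  have ht : (0:ℝ) < t := by linarith
  have h5 : (2:ℝ) ≤ Real.exp (2 * Real.pi * t) := by
    have h0 : (2:ℝ) ≤ Real.exp 1 := by
      have := Real.add_one_le_exp 1; linarith
    refine h0.trans (Real.exp_le_exp.mpr ?_)
    nlinarith [Real.pi_gt_three]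
  rw [Real.norm_eq_abs, _root_.abs_of_nonneg (Real.rpow_nonneg ht.le a),
    Real.norm_eq_abs, _root_.abs_of_nonneg (Real.exp_pos _).le] at h4
  have h7 : t ^ a ≤ Real.exp (2 * Real.pi * t) - 1 := by nlinarith
  rw [F_norm ht, Real.norm_eq_abs, Real.rpow_neg ht.le,
    _root_.abs_of_nonneg (by positivity)]
  have hta : (0:ℝ) < t ^ a := Real.rpow_pos_of_pos ht a
  rw [one_mul, div_le_iff₀ (by linarith), inv_mul_eq_div, le_div_iff₀ hta]
  nlinarith

lemma F_cont : ContinuousOn F (Set.Ioi 0) := by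
  apply ContinuousOn.div continuousOn_const
  · fun_prop
  · exact fun t ht => exp_ne_one ht

lemma F_mellin_conv {s : ℂ} (hs : s.re < 0) : MellinConvergent F (1 - s) := by
  refine mellinConvergent_of_isBigO_rpow (a := (1-s).re + 1) (b := 1)
    (F_cont.locallyIntegrableOn measurableSet_Ioi) (F_top _) (by simp) F_bot ?_
  simp only [Complex.sub_re, Complex.one_re]
  linarith

lemma F_integrable {s : ℂ} (hs : s.re < 0) :
    IntegrableOn (fun t : ℝ => (t : ℂ) ^ (-s) / (Complex.exp (2 * Real.pi * t) - 1))
      (Set.Ioi 0) := by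
  have h := F_mellin_conv hs
  rw [MellinConvergent] at h
  refine h.congr_fun (fun t ht => ?_) measurableSet_Ioi
  dsimp only
  rw [smul_eq_mul, F, mul_one_div]
  norm_num

lemma F_hasSum {t : ℝ} (ht : t ∈ Set.Ioi (0:ℝ)) :
    HasSum (fun n : ℕ ↦ (1:ℂ) * Real.exp (-(2 * Real.pi * (n+1)) * t)) (F t) := by
  simp only [Set.mem_Ioi] at ht
  set r : ℝ := Real.exp (-(2 * Real.pi * t)) with hr
  have hr0 : 0 ≤ r := (Real.exp_pos _).le
  have hr1 : r < 1 := by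
    rw [hr, Real.exp_lt_one_iff]
    have : (0:ℝ) < 2 * Real.pi * t := by positivity
    linarith
  have hgeo : HasSum (fun n : ℕ => r * r ^ n) (r * (1 - r)⁻¹) :=
    (hasSum_geometric_of_lt_one hr0 hr1).mul_left r
  have hre : ∀ n : ℕ, Real.exp (-(2 * Real.pi * (n+1)) * t) = r * r ^ n := by
    intro n
    rw [hr, ← Real.exp_nat_mul, ← Real.exp_add]
    ring_nf
  have hval : F t = ((r * (1 - r)⁻¹ : ℝ) : ℂ) := by
    rw [F_real]
    congr 1
    have hE : (1:ℝ) < Real.exp (2 * Real.pi * t) := by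
      rw [Real.one_lt_exp_iff]; positivity
    have hrE : r = (Real.exp (2 * Real.pi * t))⁻¹ := by
      rw [hr, ← Real.exp_neg]
    rw [hrE]
    field_simp
  rw [hval]
  simp only [one_mul, hre]
  exact_mod_cast Complex.hasSum_ofReal.mpr hgeo

lemma F_mellin_value {s : ℂ} (hs : s.re < 0) :
    mellin F (1 - s) = Complex.Gamma (1 - s) * ((2 * Real.pi : ℝ) : ℂ) ^ (s - 1) *
      riemannZeta (1 - s) := by
  have hs1 : 1 < (1 - s).re := by
    simp only [Complex.sub_re, Complex.one_re]; linarith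
  have hsum : Summable fun n : ℕ ↦ ‖(1:ℂ)‖ / ((2 * Real.pi * (n+1) : ℝ)) ^ (1-s).re := by
    simp only [norm_one]
    have h1 : Summable fun n : ℕ => 1 / ((n:ℝ)+1) ^ (1-s).re := by
      have := (Real.summable_one_div_nat_rpow (p := (1-s).re)).mpr hs1
      have h2 := (summable_nat_add_iff (f := fun n : ℕ => 1 / (n:ℝ) ^ (1-s).re) 1).mpr this
      refine h2.congr fun n => ?_
      push_cast
      ring_nf
    refine (h1.mul_left ((2*Real.pi) ^ (1-s).re)⁻¹).congr fun n => ?_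
    rw [one_div, one_div,
      Real.mul_rpow (by positivity) (by positivity) (x := 2 * Real.pi), mul_inv]
  have key := hasSum_mellin (F := F) (a := fun _ : ℕ => (1:ℂ))
    (p := fun n : ℕ => 2 * Real.pi * (n+1)) (fun n => Or.inr (by positivity))
    (by linarith : 0 < (1-s).re) (fun t ht => F_hasSum ht) hsum
  have key2 : HasSum (fun n : ℕ => Complex.Gamma (1-s) * ((2 * Real.pi : ℝ) : ℂ) ^ (s-1)
      * (1 / ((n:ℂ)+1) ^ (1-s))) (mellin F (1-s)) := by
    refine key.congr_fun fun n => ?_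
    have hsplit : (((2 * Real.pi * (n+1) : ℝ)) : ℂ) ^ (1-s)
        = (((2 * Real.pi : ℝ)) : ℂ) ^ (1-s) * (((n+1 : ℝ)) : ℂ) ^ (1-s) := by
      rw [← Complex.mul_cpow_ofReal_nonneg (by positivity) (by positivity)]
      norm_num
    have hinv : (((2 * Real.pi : ℝ)) : ℂ) ^ (s - 1)
        = ((((2 * Real.pi : ℝ)) : ℂ) ^ (1 - s))⁻¹ := by
      rw [show s - 1 = -(1 - s) by ring, Complex.cpow_neg]
    rw [hsplit, hinv]
    push_cast
    ring
  rw [← key2.tsum_eq, tsum_mul_left, zeta_eq_tsum_one_div_nat_add_one_cpow hs1]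

/-- For every complex `s` with `Re(s) < 0`, the integral `∫₀^∞ t^(-s)/(e^(2πt) - 1) dt`
converges and `ζ(s) = 2 sin(π s / 2) ∫₀^∞ t^(-s)/(e^(2πt) - 1) dt`. -/
theorem stmt_14 (s : ℂ) (hs : s.re < 0) :
    IntegrableOn (fun t : ℝ => (t : ℂ) ^ (-s) / (Complex.exp (2 * Real.pi * t) - 1))
      (Set.Ioi 0) ∧
    riemannZeta s = 2 * Complex.sin (Real.pi * s / 2) *
      ∫ t : ℝ in Set.Ioi 0, (t : ℂ) ^ (-s) / (Complex.exp (2 * Real.pi * t) - 1) := by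
  refine ⟨F_integrable hs, ?_⟩
  have hint : (∫ t : ℝ in Set.Ioi 0, (t : ℂ) ^ (-s) / (Complex.exp (2 * Real.pi * t) - 1))
      = mellin F (1 - s) := by
    rw [mellin]
    refine setIntegral_congr_fun measurableSet_Ioi fun t ht => ?_
    rw [smul_eq_mul, F, mul_one_div, show (1:ℂ) - s - 1 = -s by ring]
  rw [hint, F_mellin_value hs]
  have hsn : ∀ n : ℕ, (1 - s) ≠ -n := by
    intro n h
    apply_fun Complex.re at h
    simp only [Complex.sub_re, Complex.one_re, Complex.neg_re, Complex.natCast_re] at h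
    have : (0:ℝ) ≤ n := n.cast_nonneg
    linarith
  have hs1' : (1:ℂ) - s ≠ 1 := by
    intro h
    have : s = 0 := by linear_combination -h
    rw [this] at hs; simp at hs
  have feq := riemannZeta_one_sub hsn hs1'
  rw [sub_sub_cancel] at feq
  have hcos : Complex.cos (↑Real.pi * (1 - s) / 2) = Complex.sin (↑Real.pi * s / 2) := by
    rw [show (↑Real.pi : ℂ) * (1 - s) / 2 = ↑Real.pi / 2 - ↑Real.pi * s / 2 by ring,
      Complex.cos_pi_div_two_sub]
  rw [hcos] at feq
  rw [feq]
  have hb : ((2 * Real.pi : ℝ) : ℂ) = 2 * (Real.pi : ℂ) := by push_cast; ring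
  rw [show -(1 - s) = s - 1 by ring] at *
  rw [hb]
  ring
end
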